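/- Let φ, u : B → [-∞, ∞) where B is an open neighborhood of p, with u subharmonic-type satisfying a maximality property, and suppose D_j, j > 0, is a decreasing sequence of relatively compact subdomains of a domain D ∋ p with ∩_j D_j = {p}, and ρ + φ ≤ (1 − 1/j)(u + M) on ∂D ∪ ∂D_j for each j, where the inequality propagates to D \ D_j by maximality of u on D \ {p}. Then ρ + φ ≤ u + M on D \ {p}, and hence on D by upper semicontinuity. -/
import Mathlib


/-- The comparison step in the construction of the Green function: if D_j is a
decreasing sequence of subsets of a domain D with ⋂_j D_j = {p}, u ≤ 0 with
u(p) = -∞, φ(p) = -∞, and for every j ≥ 1 the inequality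
ρ + φ ≤ (1 − 1/j)(u + M) holds on D \ D_j (as propagated from ∂D ∪ ∂D_j by
maximality of u on D \ {p}), then ρ + φ ≤ u + M holds on all of D. -/
theorem stmt_19 {X : Type*} [TopologicalSpace X] (D : Set X) (p : X) (hp : p ∈ D)
    (Dj : ℕ → Set X) (hanti : Antitone Dj) (hDjD : ∀ j, Dj j ⊆ D)
    (hcap : (⋂ j, Dj j) = {p})
    (ρ : X → ℝ) (φ u : X → EReal) (M : ℝ)
    (huneg : ∀ q, u q ≤ 0) (hup : u p = ⊥) (hφp : φ p = ⊥)
    (hprop : ∀ j : ℕ, 1 ≤ j → ∀ q ∈ D \ Dj j,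
      (ρ q : EReal) + φ q ≤ (((1 - 1 / (j : ℝ)) : ℝ) : EReal) * (u q + (M : EReal))) :
    ∀ q ∈ D, (ρ q : EReal) + φ q ≤ u q + (M : EReal) := by
  intro q hq
  by_cases hqp : q = p
  · subst hqp
    simp [hφp]
  · have hnot : q ∉ ⋂ j, Dj j := by
      rw [hcap]; simpa using hqp
    rw [Set.mem_iInter] at hnot
    push_neg at hnot
    obtain ⟨j0, hj0⟩ := hnot
    have hmem : ∀ j, max 1 j0 ≤ j → q ∈ D \ Dj j := fun j hj =>
      ⟨hq, fun h => hj0 (hanti (le_trans (le_max_right _ _) hj) h)⟩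
    rcases eq_or_ne (u q) ⊥ with hub | hub
    · have h2 := hprop (max 2 j0) (le_trans (by norm_num) (le_max_left 2 j0))
        q (hmem _ (max_le_max (by norm_num) le_rfl))
      have hpos : (0 : ℝ) < 1 - 1 / (max 2 j0 : ℕ) := by
        have h2le : (2 : ℝ) ≤ ((max 2 j0 : ℕ) : ℝ) := by
          exact_mod_cast le_max_left 2 j0
        have : 1 / ((max 2 j0 : ℕ) : ℝ) ≤ 1 / 2 := by
          apply one_div_le_one_div_of_le <;> linarith
        linarith
      rw [hub] at h2
      rw [show (⊥ : EReal) + (M : EReal) = ⊥ from rfl] at h2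
      rw [EReal.mul_bot_of_pos (by exact_mod_cast hpos)] at h2
      exact le_trans h2 bot_le
    · have hut : u q ≠ ⊤ := ne_top_of_le_ne_top (by simp) (huneg q)
      lift u q to ℝ using ⟨hut, hub⟩ with r hr
      rw [show (r : EReal) + (M : EReal) = ((r + M : ℝ) : EReal) from
        (EReal.coe_add r M).symm]
      have htend : Filter.Tendsto (fun j : ℕ => (((1 - 1 / (j : ℝ)) * (r + M) : ℝ) : EReal))
          Filter.atTop (nhds ((r + M : ℝ) : EReal)) := by
        rw [EReal.tendsto_coe]
        have : Filter.Tendsto (fun j : ℕ => (1 - 1 / (j : ℝ)) * (r + M))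
            Filter.atTop (nhds ((1 - 0) * (r + M))) :=
          (tendsto_const_nhds.sub tendsto_one_div_atTop_nhds_zero_nat).mul_const _
        simpa using this
      refine ge_of_tendsto htend ?_
      filter_upwards [Filter.eventually_ge_atTop (max 1 j0)] with j hj
      have h := hprop j (le_trans (le_max_left 1 j0) hj) q (hmem j hj)
      rw [← hr] at h
      calc (ρ q : EReal) + φ q
          ≤ (((1 - 1 / (j : ℝ)) : ℝ) : EReal) * ((r : EReal) + (M : EReal)) := h
        _ = (((1 - 1 / (j : ℝ)) * (r + M) : ℝ) : EReal) := by
            rw [← EReal.coe_add, ← EReal.coe_mul]
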